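/- Let X be a Banach space, φ ∈ X^{**} of norm one with 0 < dist(φ, B_X) = γ < 1 (distance to the image of the closed unit ball of X in X^{**}), and Y = ker φ ⊂ X^*. If x ∈ X has norm one and ‖x − φ‖_{X^{**}} = γ, then for every norm-one x^* ∈ Y, |x^*(x)| ≤ γ < 1; hence Y does not 1-norm X. -/

import Mathlib

open Submodule Set Filter Topology

variable {E : Type*} [NormedAddCommGroup E] [NormedSpace ℝ E]

/-- A sequence of subspaces is a DDD: finite-dimensional, total and minimal. -/
def IsDDD (X : ℕ → Submodule ℝ E) : Prop :=
  (∀ n, FiniteDimensional ℝ (X n)) ∧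
  (⨆ n, X n).topologicalClosure = ⊤ ∧
  ∀ n, X n ⊓ (⨆ m ∈ {m | m ≠ n}, X m).topologicalClosure = ⊥

/-- `(W i)` is a finite-dimensional decomposition of its closed linear span:
every element of the closed span is the limit of partial sums of a unique
sequence of vectors `w i ∈ W i`. -/
def IsFDDof (W : ℕ → Submodule ℝ E) : Prop :=
  ∀ x ∈ (⨆ i, W i).topologicalClosure, ∃! w : ℕ → E,
    (∀ i, w i ∈ W i) ∧
      Filter.Tendsto (fun N => ∑ i ∈ Finset.range N, w i) Filter.atTop (nhds x)

/-- Skipped blocking decomposition: a DDD such that every skipped sequence of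
blocks is an FDD of its closed linear span. -/
def IsSBD (X : ℕ → Submodule ℝ E) : Prop :=
  IsDDD X ∧ ∀ n m : ℕ → ℕ, (∀ i, n i ≤ m i) → (∀ i, m i + 1 < n (i + 1)) →
    IsFDDof (fun i => ⨆ j ∈ Set.Icc (n i) (m i), X j)

/-- Minimal f.d. sequence which is a skipped blocking decomposition of its closed span. -/
def IsSBDofSpan (W : ℕ → Submodule ℝ E) : Prop :=
  (∀ n, FiniteDimensional ℝ (W n)) ∧
  (∀ n, W n ⊓ (⨆ m ∈ {m | m ≠ n}, W m).topologicalClosure = ⊥) ∧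
  ∀ n m : ℕ → ℕ, (∀ i, n i ≤ m i) → (∀ i, m i + 1 < n (i + 1)) →
    IsFDDof (fun i => ⨆ j ∈ Set.Icc (n i) (m i), W j)

/-- Norm of the skipped projection `R_{m,k}` onto `X[0,m)` with kernel the closed
span of the tail `X[k+1,∞)` (the spaces `X_m, …, X_k` are skipped). -/
noncomputable def skippedNorm (X : ℕ → Submodule ℝ E) (m k : ℕ) : ℝ :=
  sInf {C : ℝ | 0 ≤ C ∧ ∀ a ∈ (⨆ i ∈ Set.Iio m, X i),
    ∀ b ∈ (⨆ i ∈ Set.Ici (k + 1), X i).topologicalClosure, ‖a‖ ≤ C * ‖a + b‖}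

/-- Annihilator of a subspace in the continuous dual. -/
noncomputable def ann {F : Type*} [NormedAddCommGroup F] [NormedSpace ℝ F] (S : Submodule ℝ F) :
    Submodule ℝ (F →L[ℝ] ℝ) where
  carrier := {f | ∀ x ∈ S, f x = 0}
  add_mem' := by intro f g hf hg x hx; simp [hf x hx, hg x hx]
  zero_mem' := by intro x hx; simp
  smul_mem' := by intro c f hf x hx; simp [hf x hx]

/-- The predecomposition space `Y = [X_n^*]` of a DDD, where
`X_n^* = [X_m]^⊥_{m ≠ n}`. -/
noncomputable def predecomp (X : ℕ → Submodule ℝ E) : Submodule ℝ (E →L[ℝ] ℝ) :=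
  (⨆ n, ann ((⨆ m ∈ {m | m ≠ n}, X m).topologicalClosure)).topologicalClosure

/-- A sequence of subspaces is boundedly complete: boundedness of the partial sums
of a sequence of vectors from the subspaces implies norm convergence. -/
def IsBddCompl (W : ℕ → Submodule ℝ E) : Prop :=
  ∀ v : ℕ → E, (∀ i, v i ∈ W i) →
    BddAbove (Set.range fun N => ‖∑ i ∈ Finset.range N, v i‖) →
    ∃ s : E, Filter.Tendsto (fun N => ∑ i ∈ Finset.range N, v i) Filter.atTop (nhds s)

/-- A Schauder basis of `E`. -/
def IsSchauderBasis (e : ℕ → E) : Prop :=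
  ∀ x : E, ∃! a : ℕ → ℝ,
    Filter.Tendsto (fun N => ∑ i ∈ Finset.range N, a i • e i) Filter.atTop (nhds x)

open NormedSpace in
/-- If `φ ∈ X^{**}` has norm one, `0 < dist(φ, B_X) = γ < 1`, and
`Y = ker φ ⊆ X^*`, then any norm-one `x ∈ X` with `‖x - φ‖ = γ` satisfies
`|x^*(x)| ≤ γ < 1` for all norm-one `x^* ∈ Y`; hence `Y` does not 1-norm `X`. -/
theorem stmt14 [CompleteSpace E] (φ : StrongDual ℝ (StrongDual ℝ E)) (hφ : ‖φ‖ = 1)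
    (γ : ℝ)
    (hγdist : γ = Metric.infDist φ
      ((inclusionInDoubleDual ℝ E) '' (Metric.closedBall (0 : E) 1)))
    (hγpos : 0 < γ) (hγlt : γ < 1)
    (x : E) (hx : ‖x‖ = 1) (hxγ : ‖inclusionInDoubleDual ℝ E x - φ‖ = γ) :
    (∀ f : StrongDual ℝ E, φ f = 0 → ‖f‖ = 1 → |f x| ≤ γ) ∧
    ¬ (∀ z : E, ‖z‖ = sSup {r : ℝ | ∃ f : StrongDual ℝ E, φ f = 0 ∧ ‖f‖ ≤ 1 ∧ r = |f z|}) := by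
  have key : ∀ f : StrongDual ℝ E, φ f = 0 → ‖f‖ ≤ 1 → |f x| ≤ γ := by
    intro f hf hfn
    have : |f x| = ‖(inclusionInDoubleDual ℝ E x - φ) f‖ := by
      simp [dual_def, hf, Real.norm_eq_abs]
    rw [this]
    calc ‖(inclusionInDoubleDual ℝ E x - φ) f‖ ≤ ‖inclusionInDoubleDual ℝ E x - φ‖ * ‖f‖ :=
          (inclusionInDoubleDual ℝ E x - φ).le_opNorm f
      _ ≤ γ * 1 := by rw [hxγ]; exact mul_le_mul_of_nonneg_left hfn hγpos.le
      _ = γ := mul_one γ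
  refine ⟨fun f hf hfn => key f hf hfn.le, fun h => ?_⟩
  have hS : sSup {r : ℝ | ∃ f : StrongDual ℝ E, φ f = 0 ∧ ‖f‖ ≤ 1 ∧ r = |f x|} ≤ γ := by
    apply Real.sSup_le
    · rintro r ⟨f, hf, hfn, rfl⟩
      exact key f hf hfn
    · exact hγpos.le
  have := h x
  rw [hx] at this
  linarith
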